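/- Let u>0, s>0 with u<s, ν₀=0 and ν₁=1. Let y : [0,∞) → ℝ be differentiable with y(0)=y₀ and y'(t) = −s y(t)(1−y(t)) + u(1−y(t)) for all t ≥ 0. If y₀ ∈ [0,1), then y(t) → u/s as t → ∞; if y₀ = 1, then y(t) = 1 for all t ≥ 0. -/

import Mathlib

open Filter Real Set

/-- Gronwall-type uniqueness: if `f' = c · f` with `c` continuous on `[a,b]` and `f a = 0`,
then `f = 0` on `[a,b]`. -/
lemma gronwall_aux (c f : ℝ → ℝ) (a b : ℝ)
    (hc : ContinuousOn c (Set.Icc a b))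
    (hf : ∀ t ∈ Set.Icc a b, HasDerivAt f (c t * f t) t)
    (hfa : f a = 0) : ∀ t ∈ Set.Icc a b, f t = 0 := by
  have hfc : ContinuousOn f (Set.Icc a b) :=
    fun t ht => ((hf t ht).continuousAt).continuousWithinAt
  obtain ⟨K, hK⟩ := (isCompact_Icc (a := a) (b := b)).exists_bound_of_continuousOn hc
  intro t ht
  have h := norm_le_gronwallBound_of_norm_deriv_right_le (f := f)
    (f' := fun t => c t * f t) (δ := 0) (K := K) (ε := 0) hfc
    (fun x hx => (hf x (Set.mem_Icc_of_Ico hx)).hasDerivWithinAt)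
    (by simp [hfa])
    (fun x hx => by
      rw [norm_mul, add_zero]
      exact mul_le_mul_of_nonneg_right (hK x (Set.mem_Icc_of_Ico hx)) (norm_nonneg _))
    t ht
  rw [gronwallBound_ε0_δ0] at h
  simpa using h

/-- For unidirectional mutation (`ν₀ = 0`, `ν₁ = 1`) with `u < s`: solutions of
`y' = -s y (1-y) + u (1-y)` started in `[0,1)` converge to `u/s`, while the solution
started at `1` stays at `1`. -/
theorem mutation_selection_unidirectional_convergence
    (u s : ℝ) (hu : 0 < u) (hs : 0 < s) (hus : u < s)
    (y : ℝ → ℝ) (y₀ : ℝ) (hinit : y 0 = y₀)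
    (hode : ∀ t : ℝ, 0 ≤ t →
      HasDerivAt y (-s * y t * (1 - y t) + u * (1 - y t)) t) :
    (y₀ ∈ Set.Ico (0 : ℝ) 1 → Tendsto y atTop (nhds (u / s))) ∧
    (y₀ = 1 → ∀ t : ℝ, 0 ≤ t → y t = 1) := by
  have hycont : ∀ t : ℝ, 0 ≤ t → ContinuousAt y t := fun t ht => (hode t ht).continuousAt
  -- forward invariance of 1
  have fwd : ∀ t₀ : ℝ, 0 ≤ t₀ → y t₀ = 1 → ∀ t : ℝ, t₀ ≤ t → y t = 1 := by
    intro t₀ ht₀ hyt₀ t ht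
    have hz := gronwall_aux (fun τ => -(u - s * y τ)) (fun τ => y τ - 1) t₀ t
      (by
        apply ContinuousOn.neg
        apply ContinuousOn.sub continuousOn_const
        exact ContinuousOn.mul continuousOn_const
          (fun τ hτ => (hycont τ (le_trans ht₀ hτ.1)).continuousWithinAt))
      (by
        intro τ hτ
        have := (hode τ (le_trans ht₀ hτ.1)).sub_const 1
        refine this.congr_deriv ?_
        ring)
      (by simp [hyt₀])
    have := hz t ⟨ht, le_refl t⟩
    simp only [sub_eq_zero] at this
    exact this
  -- backward invariance of 1
  have bwd : ∀ t₀ : ℝ, 0 ≤ t₀ → y t₀ = 1 → y 0 = 1 := by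
    intro t₀ ht₀ hyt₀
    have hz := gronwall_aux (fun τ => (u - s * y (t₀ - τ))) (fun τ => y (t₀ - τ) - 1) 0 t₀
      (by
        apply ContinuousOn.sub continuousOn_const
        apply ContinuousOn.mul continuousOn_const
        intro τ hτ
        exact ((hycont (t₀ - τ) (by simp [hτ.2])).comp
          (continuous_const.sub continuous_id).continuousAt).continuousWithinAt)
      (by
        intro τ hτ
        have hmem : (0:ℝ) ≤ t₀ - τ := by simp [hτ.2]
        have hcomp : HasDerivAt (fun τ => y (t₀ - τ))
            ((-s * y (t₀ - τ) * (1 - y (t₀ - τ)) + u * (1 - y (t₀ - τ))) * (-1)) τ :=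
          (hode (t₀ - τ) hmem).comp τ ((hasDerivAt_id τ).const_sub t₀)
        have := hcomp.sub_const 1
        refine this.congr_deriv ?_
        ring)
      (by simp [hyt₀])
    have h0 := hz t₀ ⟨ht₀, le_refl t₀⟩
    simp only [sub_self, sub_eq_zero] at h0
    exact h0
  constructor
  · rintro ⟨hy₀0, hy₀1⟩
    -- y stays below 1
    have hlt1 : ∀ t : ℝ, 0 ≤ t → y t < 1 := by
      intro t ht
      by_contra h
      push_neg at h
      -- y never equals 1 on [0,∞)
      have hne : ∀ τ : ℝ, 0 ≤ τ → y τ ≠ 1 := by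
        intro τ hτ hEq
        have := bwd τ hτ hEq
        rw [hinit] at this
        linarith
      rcases lt_or_eq_of_le h with h1 | h1
      · -- y t > 1, y 0 < 1 : IVT gives a point equal to 1
        have hcont : ContinuousOn y (Set.Icc 0 t) :=
          fun τ hτ => (hycont τ hτ.1).continuousWithinAt
        have : (1:ℝ) ∈ Set.Icc (y 0) (y t) := ⟨by rw [hinit]; linarith, le_of_lt h1⟩
        obtain ⟨c, hc, hyc⟩ := intermediate_value_Icc ht hcont this
        exact hne c hc.1 hyc
      · exact hne t ht h1.symm
    set w : ℝ → ℝ := fun t => (u - s * y t) / (1 - y t) with hw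
    have hden : ∀ t : ℝ, 0 ≤ t → (1 : ℝ) - y t ≠ 0 := fun t ht => by
      have := hlt1 t ht; linarith
    -- derivative of w
    have hwderiv : ∀ t : ℝ, 0 ≤ t → HasDerivAt w ((u - s) * w t) t := by
      intro t ht
      have hnum : HasDerivAt (fun τ => u - s * y τ)
          (-(s * (-s * y t * (1 - y t) + u * (1 - y t)))) t :=
        ((hode t ht).const_mul s).const_sub u
      have hden' : HasDerivAt (fun τ => 1 - y τ)
          (-(-s * y t * (1 - y t) + u * (1 - y t))) t := (hode t ht).const_sub 1
      have := hnum.div hden' (hden t ht)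
      refine this.congr_deriv ?_
      simp only [hw]
      field_simp [hden t ht]
      ring
    -- v = w * exp((s-u) t) is constant
    set v : ℝ → ℝ := fun t => w t * Real.exp ((s - u) * t) with hv
    have hvderiv : ∀ t : ℝ, 0 ≤ t → HasDerivAt v 0 t := by
      intro t ht
      have he : HasDerivAt (fun τ : ℝ => Real.exp ((s - u) * τ))
          (Real.exp ((s - u) * t) * (s - u)) t := by
        have : HasDerivAt (fun τ : ℝ => (s - u) * τ) (s - u) t := by
          simpa using (hasDerivAt_id t).const_mul (s - u)
        exact (Real.hasDerivAt_exp ((s - u) * t)).comp t this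
      have := (hwderiv t ht).mul he
      refine this.congr_deriv ?_
      ring
    have hvconst : ∀ t : ℝ, 0 ≤ t → v t = v 0 := by
      intro t ht
      have := constant_of_has_deriv_right_zero (f := v) (a := 0) (b := t)
        (fun τ hτ => ((hvderiv τ hτ.1).continuousAt).continuousWithinAt)
        (fun τ hτ => (hvderiv τ hτ.1).hasDerivWithinAt)
      exact this t ⟨ht, le_refl t⟩
    have hwformula : ∀ t : ℝ, 0 ≤ t → w t = w 0 * Real.exp ((u - s) * t) := by
      intro t ht
      have h1 : w t * Real.exp ((s - u) * t) = w 0 := by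
        simpa [hv] using hvconst t ht
      have hepos : Real.exp ((s - u) * t) ≠ 0 := (Real.exp_pos _).ne'
      rw [show (u - s) * t = -((s - u) * t) by ring, Real.exp_neg,
        ← div_eq_mul_inv, eq_div_iff hepos]
      exact h1
    -- w tends to 0
    have hwlim : Tendsto w atTop (nhds 0) := by
      have h1 : Tendsto (fun t : ℝ => (u - s) * t) atTop atBot := by
        apply tendsto_id.const_mul_atTop_of_neg
        linarith
      have h2 : Tendsto (fun t : ℝ => w 0 * Real.exp ((u - s) * t)) atTop (nhds 0) := by
        have := (Real.tendsto_exp_atBot).comp h1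
        simpa using this.const_mul (w 0)
      apply h2.congr'
      filter_upwards [eventually_ge_atTop (0:ℝ)] with t ht
      exact (hwformula t ht).symm
    -- y in terms of w
    have hyformula : ∀ t : ℝ, 0 ≤ t → y t = (u - w t) / (s - w t) := by
      intro t ht
      have hd := hden t ht
      have h1 : (0:ℝ) < 1 - y t := by have := hlt1 t ht; linarith
      have hsw : s - w t ≠ 0 := by
        have h2 : s - w t = (s - u) / (1 - y t) := by
          simp only [hw]; field_simp; ring
        rw [h2]
        exact div_ne_zero (by linarith) (by linarith)
      have h2 : w t * (1 - y t) = u - s * y t := by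
        simp only [hw]; field_simp
      have h3 : y t * (s - w t) = u - w t := by linear_combination h2
      rw [eq_div_iff hsw]
      linear_combination h3
    -- conclude
    have hlim : Tendsto (fun t => (u - w t) / (s - w t)) atTop (nhds (u / s)) := by
      have h1 : Tendsto (fun t => u - w t) atTop (nhds (u - 0)) :=
        tendsto_const_nhds.sub hwlim
      have h2 : Tendsto (fun t => s - w t) atTop (nhds (s - 0)) :=
        tendsto_const_nhds.sub hwlim
      rw [sub_zero] at h1 h2
      exact h1.div h2 hs.ne'
    apply hlim.congr'
    filter_upwards [eventually_ge_atTop (0:ℝ)] with t ht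
    exact (hyformula t ht).symm
  · intro h1 t ht
    exact fwd 0 (le_refl 0) (by rw [hinit, h1]) t ht
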